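/- Let V : (0,∞) → M₂(ℂ) be continuous, E₁, E₂ ∈ ℂ, and let u₁, u₂ : (0,∞) → M₂(ℂ) be twice differentiable matrix solutions of −u_j'' + V u_j = E_j u_j with u₁(r), u₂(r) invertible for all r. Set w_j = u_j'u_j⁻¹ and assume w₂(r) − w₁(r) is invertible for all r, so that ũ₂(r) = (w₁(r) − w₂(r))u₂(r) is invertible, and set w̃₂ = ũ₂'ũ₂⁻¹. Then the two-fold superpotential W₂(r) = w₁(r) + w̃₂(r) satisfies W₂(r) = (E₁ − E₂)(w₂(r) − w₁(r))⁻¹ for all r. -/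

import Mathlib

open Matrix Set

private lemma entryMul {A B : ℝ → Matrix (Fin 2) (Fin 2) ℂ} {A' B' : Matrix (Fin 2) (Fin 2) ℂ} {r : ℝ}
    (hA : ∀ i j, HasDerivAt (fun t => A t i j) (A' i j) r)
    (hB : ∀ i j, HasDerivAt (fun t => B t i j) (B' i j) r) (i j : Fin 2) :
    HasDerivAt (fun t => (A t * B t) i j) ((A' * B r + A r * B') i j) r := by
  simp only [Matrix.mul_apply, Matrix.add_apply]
  have h := HasDerivAt.fun_sum (u := (Finset.univ : Finset (Fin 2)))
    (A := fun k t => A t i k * B t k j) (x := r)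
    (A' := fun k => A' i k * B r k j + A r i k * B' k j)
    (fun k _ => (hA i k).mul (hB k j))
  rw [Finset.sum_add_distrib] at h
  exact h

private lemma diffInvEntry {u : ℝ → Matrix (Fin 2) (Fin 2) ℂ} {r : ℝ}
    (hu : ∀ i j, DifferentiableAt ℝ (fun t => u t i j) r)
    (hdet : (u r).det ≠ 0) (i j : Fin 2) :
    DifferentiableAt ℝ (fun t => (u t)⁻¹ i j) r := by
  have hde : ∀ t, (u t).det = u t 0 0 * u t 1 1 - u t 0 1 * u t 1 0 :=
    fun t => Matrix.det_fin_two _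
  have hdiffdet : DifferentiableAt ℝ (fun t => (u t).det) r := by
    simp only [hde]
    exact ((hu 0 0).mul (hu 1 1)).sub ((hu 0 1).mul (hu 1 0))
  have hdinv : DifferentiableAt ℝ (fun t => ((u t).det)⁻¹) r := hdiffdet.inv hdet
  have hrw : ∀ t, (u t)⁻¹ i j = ((u t).det)⁻¹ * (u t).adjugate i j := by
    intro t
    rw [Matrix.inv_def, Matrix.smul_apply, Ring.inverse_eq_inv, smul_eq_mul]
  simp only [hrw]
  have hadj : DifferentiableAt ℝ (fun t => (u t).adjugate i j) r := by
    fin_cases i <;> fin_cases j <;> simp [Matrix.adjugate_fin_two] <;>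
      first
        | exact hu _ _
        | exact (hu _ _).neg
  exact hdinv.mul hadj

private lemma hasDerivAtInvEntry {u u' : ℝ → Matrix (Fin 2) (Fin 2) ℂ} {r : ℝ} (hr : r ∈ Ioi (0:ℝ))
    (hu : ∀ s ∈ Ioi (0:ℝ), ∀ i j, HasDerivAt (fun t => u t i j) (u' s i j) s)
    (hinv : ∀ s ∈ Ioi (0:ℝ), IsUnit (u s)) (i j : Fin 2) :
    HasDerivAt (fun t => (u t)⁻¹ i j) ((-((u r)⁻¹ * u' r * (u r)⁻¹)) i j) r := by
  have hdet : (u r).det ≠ 0 :=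
    IsUnit.ne_zero ((Matrix.isUnit_iff_isUnit_det _).mp (hinv r hr))
  set D : Matrix (Fin 2) (Fin 2) ℂ :=
    Matrix.of (fun i j => deriv (fun t => (u t)⁻¹ i j) r) with hD_def
  have hD : ∀ i j, HasDerivAt (fun t => (u t)⁻¹ i j) (D i j) r := fun i j =>
    (diffInvEntry (fun i j => (hu r hr i j).differentiableAt) hdet i j).hasDerivAt
  have hprod : ∀ i j, HasDerivAt (fun t => (u t * (u t)⁻¹) i j)
      ((u' r * (u r)⁻¹ + u r * D) i j) r :=
    entryMul (fun i j => hu r hr i j) hD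
  have hzero : ∀ i j, HasDerivAt (fun t => (u t * (u t)⁻¹) i j) 0 r := by
    intro i j
    have hEv : (fun t => (u t * (u t)⁻¹) i j) =ᶠ[nhds r]
        (fun _ => (1 : Matrix (Fin 2) (Fin 2) ℂ) i j) := by
      filter_upwards [isOpen_Ioi.mem_nhds hr] with t ht
      rw [Matrix.mul_nonsing_inv _ ((Matrix.isUnit_iff_isUnit_det _).mp (hinv t ht))]
    exact (hasDerivAt_const r _).congr_of_eventuallyEq hEv
  have hmat : u' r * (u r)⁻¹ + u r * D = 0 :=
    Matrix.ext fun i j => (hprod i j).unique (hzero i j)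
  have h1 : u r * D = -(u' r * (u r)⁻¹) :=
    eq_neg_of_add_eq_zero_left (by rw [add_comm]; exact hmat)
  have h2 : D = -((u r)⁻¹ * u' r * (u r)⁻¹) := by
    have h3 : (u r)⁻¹ * (u r * D) = (u r)⁻¹ * -(u' r * (u r)⁻¹) := by rw [h1]
    rw [← mul_assoc, Matrix.nonsing_inv_mul _ ((Matrix.isUnit_iff_isUnit_det _).mp (hinv r hr)),
      one_mul] at h3
    rw [h3, mul_neg, mul_assoc]
  rw [← h2]
  exact hD i j

/-- The two-fold superpotential `W₂ = w₁ + w̃₂` of a chain of two SUSY transformations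
with factorization energies `E₁, E₂` equals `(E₁ - E₂)(w₂ - w₁)⁻¹`; moreover
`ũ₂ = (w₁ - w₂)u₂` is invertible. -/
theorem twofold_superpotential_eq
    (V u₁ u₁' u₁'' u₂ u₂' u₂'' : ℝ → Matrix (Fin 2) (Fin 2) ℂ) (E₁ E₂ : ℂ)
    (hV : ContinuousOn V (Ioi 0))
    (hu₁ : ∀ r ∈ Ioi (0:ℝ), ∀ i j, HasDerivAt (fun t => u₁ t i j) (u₁' r i j) r)
    (hu₁' : ∀ r ∈ Ioi (0:ℝ), ∀ i j, HasDerivAt (fun t => u₁' t i j) (u₁'' r i j) r)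
    (hu₂ : ∀ r ∈ Ioi (0:ℝ), ∀ i j, HasDerivAt (fun t => u₂ t i j) (u₂' r i j) r)
    (hu₂' : ∀ r ∈ Ioi (0:ℝ), ∀ i j, HasDerivAt (fun t => u₂' t i j) (u₂'' r i j) r)
    (heq₁ : ∀ r ∈ Ioi (0:ℝ), -u₁'' r + V r * u₁ r = E₁ • u₁ r)
    (heq₂ : ∀ r ∈ Ioi (0:ℝ), -u₂'' r + V r * u₂ r = E₂ • u₂ r)
    (hinv₁ : ∀ r ∈ Ioi (0:ℝ), IsUnit (u₁ r))
    (hinv₂ : ∀ r ∈ Ioi (0:ℝ), IsUnit (u₂ r))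
    (w₁ w₂ : ℝ → Matrix (Fin 2) (Fin 2) ℂ)
    (hw₁ : ∀ r, w₁ r = u₁' r * (u₁ r)⁻¹)
    (hw₂ : ∀ r, w₂ r = u₂' r * (u₂ r)⁻¹)
    (hinvw : ∀ r ∈ Ioi (0:ℝ), IsUnit (w₂ r - w₁ r))
    (tu₂ tu₂' : ℝ → Matrix (Fin 2) (Fin 2) ℂ)
    (htu₂ : ∀ r, tu₂ r = (w₁ r - w₂ r) * u₂ r)
    (htu₂' : ∀ r ∈ Ioi (0:ℝ), ∀ i j, HasDerivAt (fun t => tu₂ t i j) (tu₂' r i j) r)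
    (tw₂ : ℝ → Matrix (Fin 2) (Fin 2) ℂ)
    (htw₂ : ∀ r, tw₂ r = tu₂' r * (tu₂ r)⁻¹) :
    ∀ r ∈ Ioi (0:ℝ),
      IsUnit (tu₂ r) ∧
      w₁ r + tw₂ r = (E₁ - E₂) • (w₂ r - w₁ r)⁻¹ := by
  intro r hr
  have hu1det := (Matrix.isUnit_iff_isUnit_det _).mp (hinv₁ r hr)
  have hu2det := (Matrix.isUnit_iff_isUnit_det _).mp (hinv₂ r hr)
  have hMunit : IsUnit (w₁ r - w₂ r) := by
    have := (hinvw r hr).neg; rwa [neg_sub] at this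
  have hMdet := (Matrix.isUnit_iff_isUnit_det _).mp hMunit
  have htuunit : IsUnit (tu₂ r) := by rw [htu₂]; exact hMunit.mul (hinv₂ r hr)
  refine ⟨htuunit, ?_⟩
  -- entrywise derivatives of w₁ and w₂
  have hW1' : ∀ i j, HasDerivAt (fun t => w₁ t i j)
      ((u₁'' r * (u₁ r)⁻¹ - w₁ r * w₁ r) i j) r := by
    intro i j
    have h := entryMul (fun i j => hu₁' r hr i j) (hasDerivAtInvEntry hr hu₁ hinv₁) i j
    have hfun : (fun t => (u₁' t * (u₁ t)⁻¹) i j) = fun t => w₁ t i j := by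
      funext t; rw [hw₁]
    rw [hfun] at h
    have hmateq : u₁'' r * (u₁ r)⁻¹ - w₁ r * w₁ r
        = u₁'' r * (u₁ r)⁻¹ + u₁' r * -((u₁ r)⁻¹ * u₁' r * (u₁ r)⁻¹) := by
      rw [hw₁]; noncomm_ring
    rw [hmateq]
    exact h
  have hW2' : ∀ i j, HasDerivAt (fun t => w₂ t i j)
      ((u₂'' r * (u₂ r)⁻¹ - w₂ r * w₂ r) i j) r := by
    intro i j
    have h := entryMul (fun i j => hu₂' r hr i j) (hasDerivAtInvEntry hr hu₂ hinv₂) i j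
    have hfun : (fun t => (u₂' t * (u₂ t)⁻¹) i j) = fun t => w₂ t i j := by
      funext t; rw [hw₂]
    rw [hfun] at h
    have hmateq : u₂'' r * (u₂ r)⁻¹ - w₂ r * w₂ r
        = u₂'' r * (u₂ r)⁻¹ + u₂' r * -((u₂ r)⁻¹ * u₂' r * (u₂ r)⁻¹) := by
      rw [hw₂]; noncomm_ring
    rw [hmateq]
    exact h
  -- the ODE gives u'' u⁻¹ = V - E•1
  have hode₁ : u₁'' r * (u₁ r)⁻¹ = V r - E₁ • 1 := by
    have h2 : u₁'' r = V r * u₁ r - E₁ • u₁ r := by rw [← heq₁ r hr]; abel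
    rw [h2, sub_mul, mul_assoc, Matrix.mul_nonsing_inv _ hu1det, mul_one, smul_mul_assoc,
      Matrix.mul_nonsing_inv _ hu1det]
  have hode₂ : u₂'' r * (u₂ r)⁻¹ = V r - E₂ • 1 := by
    have h2 : u₂'' r = V r * u₂ r - E₂ • u₂ r := by rw [← heq₂ r hr]; abel
    rw [h2, sub_mul, mul_assoc, Matrix.mul_nonsing_inv _ hu2det, mul_one, smul_mul_assoc,
      Matrix.mul_nonsing_inv _ hu2det]
  -- identify tu₂'
  have hKey : tu₂' r = ((E₂ - E₁) • 1 - w₁ r * w₁ r + w₂ r * w₂ r) * u₂ r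
      + (w₁ r - w₂ r) * u₂' r := by
    apply Matrix.ext; intro i j
    have hA : ∀ i j, HasDerivAt (fun t => (w₁ t - w₂ t) i j)
        ((((E₂ - E₁) • 1 - w₁ r * w₁ r + w₂ r * w₂ r) : Matrix (Fin 2) (Fin 2) ℂ) i j) r := by
      intro i j
      have h := (hW1' i j).fun_sub (hW2' i j)
      have heqm : ((E₂ - E₁) • (1 : Matrix (Fin 2) (Fin 2) ℂ) - w₁ r * w₁ r + w₂ r * w₂ r) =
          (u₁'' r * (u₁ r)⁻¹ - w₁ r * w₁ r) - (u₂'' r * (u₂ r)⁻¹ - w₂ r * w₂ r) := by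
        rw [hode₁, hode₂, sub_smul]; abel
      rw [heqm]
      simpa [Matrix.sub_apply] using h
    have h := entryMul hA (fun i j => hu₂ r hr i j) i j
    have hfun : (fun t => ((w₁ t - w₂ t) * u₂ t) i j) = fun t => tu₂ t i j := by
      funext t; rw [htu₂]
    rw [hfun] at h
    exact (htu₂' r hr i j).unique h
  -- algebraic conclusion
  have hMN : (w₁ r - w₂ r) * (w₁ r - w₂ r)⁻¹ = 1 := Matrix.mul_nonsing_inv _ hMdet
  have hNM : (w₁ r - w₂ r)⁻¹ * (w₁ r - w₂ r) = 1 := Matrix.nonsing_inv_mul _ hMdet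
  have hcc : u₂ r * (u₂ r)⁻¹ = 1 := Matrix.mul_nonsing_inv _ hu2det
  have hbN : (w₂ r - w₁ r)⁻¹ = -(w₁ r - w₂ r)⁻¹ := by
    apply Matrix.inv_eq_right_inv
    rw [← neg_sub (w₁ r) (w₂ r), neg_mul_neg, hMN]
  rw [htw₂, hKey, htu₂, Matrix.mul_inv_rev, hbN, smul_neg, ← neg_smul, neg_sub]
  set N := (w₁ r - w₂ r)⁻¹ with hN
  have e1 : u₂ r * ((u₂ r)⁻¹ * N) = N := by rw [← mul_assoc, hcc, one_mul]
  have e2 : u₂' r * ((u₂ r)⁻¹ * N) = w₂ r * N := by rw [← mul_assoc, ← hw₂]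
  rw [add_mul, mul_assoc, e1, mul_assoc, e2, ← mul_assoc]
  have hsum : w₁ r * (w₁ r - w₂ r)
      + (((E₂ - E₁) • (1 : Matrix (Fin 2) (Fin 2) ℂ) - w₁ r * w₁ r + w₂ r * w₂ r)
      + (w₁ r - w₂ r) * w₂ r)
      = (E₂ - E₁) • (1 : Matrix (Fin 2) (Fin 2) ℂ) := by
    generalize (E₂ - E₁) • (1 : Matrix (Fin 2) (Fin 2) ℂ) = e
    noncomm_ring
  calc w₁ r + (((E₂ - E₁) • 1 - w₁ r * w₁ r + w₂ r * w₂ r) * N + (w₁ r - w₂ r) * w₂ r * N)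
      = (w₁ r * (w₁ r - w₂ r)
          + (((E₂ - E₁) • (1 : Matrix (Fin 2) (Fin 2) ℂ) - w₁ r * w₁ r + w₂ r * w₂ r)
          + (w₁ r - w₂ r) * w₂ r)) * N := by
        rw [add_mul, add_mul, mul_assoc (w₁ r), hMN, mul_one, add_mul, add_mul]
    _ = ((E₂ - E₁) • (1 : Matrix (Fin 2) (Fin 2) ℂ)) * N := by rw [hsum]
    _ = (E₂ - E₁) • N := by rw [smul_mul_assoc, one_mul]
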